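/- Let f' : {0,1}^{2n-1} → {0,1} be a monotone Boolean function with Shapley value Φ_{f'}(1) = λ and λ ≥ 1/n. Let μ'(j) denote the fraction of size-j subsets of [2n-1]\{1} in the boundary B_{f'}(1). Then ∑_{0 ≤ i < j ≤ 2n-2} μ'(i,j) ≥ (λ²/2)·C(2n-1, 2), where μ'(i,j) is the fraction of nested pairs (S,T) with |S|=i, |T|=j, S ⊆ T ⊆ [2n-1]\{1} having both S and T in the boundary. -/

import Mathlib

set_option linter.unusedSectionVars false
set_option linter.unusedVariables false
set_option maxHeartbeats 1000000


open Finset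

/-- A Boolean function on subsets of `Fin m` is monotone. -/
def MonotoneB {m : ℕ} (f : Finset (Fin m) → Bool) : Prop :=
  ∀ S T : Finset (Fin m), S ⊆ T → f S = true → f T = true

/-- The boundary of coordinate `i`: sets `S` not containing `i` with
`f (S ∪ {i}) = 1` and `f S = 0`. -/
def boundary {m : ℕ} (f : Finset (Fin m) → Bool) (i : Fin m) : Finset (Finset (Fin m)) :=
  Finset.univ.filter (fun S => i ∉ S ∧ f (insert i S) = true ∧ f S = false)

/-- `mu f i j` : the fraction of size-`j` subsets of `[m] \ {i}` lying in the
boundary of coordinate `i`. -/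
def mu {m : ℕ} (f : Finset (Fin m) → Bool) (i : Fin m) (j : ℕ) : ℚ :=
  (((boundary f i).filter (fun S => S.card = j)).card : ℚ) / (((m - 1).choose j : ℕ) : ℚ)

/-- The Shapley value of coordinate `i` of `f` : the probability over a uniformly
random permutation `σ` that `i` is the pivotal coordinate on the increasing path
`∅ = P₀ ⊂ P₁ ⊂ ⋯ ⊂ Pₘ = univ` given by `σ`. -/
def shapley {m : ℕ} (f : Finset (Fin m) → Bool) (i : Fin m) : ℚ :=
  (((Finset.univ : Finset (Equiv.Perm (Fin m))).filter (fun σ =>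
    ∃ j : Fin m, σ j = i ∧
      f ((Finset.univ.filter (fun k => k < j)).image (fun k => σ k)) = false ∧
      f ((Finset.univ.filter (fun k => k ≤ j)).image (fun k => σ k)) = true)).card : ℚ)
    / ((Nat.factorial m : ℕ) : ℚ)

/-- `g` is the minor of `f` with respect to `π`. -/
def minorOf {m k : ℕ} (g : Finset (Fin k) → Bool) (f : Finset (Fin m) → Bool)
    (π : Fin m → Fin k) : Prop :=
  ∀ S : Finset (Fin k), g S = f (Finset.univ.filter (fun i => π i ∈ S))

/-- The minor of `f` with respect to `π`, as a function. -/
def minorFun {m k : ℕ} (f : Finset (Fin m) → Bool) (π : Fin m → Fin k) :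
    Finset (Fin k) → Bool :=
  fun S => f (Finset.univ.filter (fun i => π i ∈ S))

/-- `muPair f i0 i j` : the fraction of nested pairs `(S,T)` with `|S| = i`,
`|T| = j`, `S ⊆ T ⊆ [m] \ {i0}` such that both `S` and `T` lie in the boundary
of coordinate `i0`. -/
def muPair {m : ℕ} (f : Finset (Fin m) → Bool) (i0 : Fin m) (i j : ℕ) : ℚ :=
  (((Finset.univ : Finset (Finset (Fin m) × Finset (Fin m))).filter
    (fun P => P.1.card = i ∧ P.2.card = j ∧ P.1 ⊆ P.2 ∧
      P.1 ∈ boundary f i0 ∧ P.2 ∈ boundary f i0)).card : ℚ) /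
    ((((m-1).choose i * ((m-1-i).choose (j-i)) : ℕ)) : ℚ)



section blocks
variable {α : Type*} [Fintype α] [DecidableEq α]

private noncomputable def permBlocksEquiv (κ κ' : α → Fin 4) :
    {σ : Equiv.Perm α // ∀ x, κ' (σ x) = κ x} ≃
      (∀ k : Fin 4, {x // κ x = k} ≃ {x // κ' x = k}) where
  toFun σ := fun k =>
    { toFun := fun x => ⟨σ.1 x.1, by rw [σ.2]; exact x.2⟩
      invFun := fun y => ⟨σ.1.symm y.1, by
        have h := σ.2 (σ.1.symm y.1)
        rw [Equiv.apply_symm_apply] at h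
        rw [← h]; exact y.2⟩
      left_inv := fun x => by simp
      right_inv := fun y => by simp }
  invFun F :=
    ⟨Equiv.ofBijective (fun x => (F (κ x) ⟨x, rfl⟩).1)
      (Finite.injective_iff_bijective.mp (by
        intro x y hxy
        replace hxy : (F (κ x) ⟨x, rfl⟩).1 = (F (κ y) ⟨y, rfl⟩).1 := hxy
        have key : ∀ (k k' : Fin 4) (hk : k = k') (z : α) (h1 : κ z = k) (h2 : κ z = k'),
            ((F k ⟨z, h1⟩).1 = (F k' ⟨z, h2⟩).1) := by
          rintro k k' rfl z h1 h2; rfl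
        have hk : κ x = κ y := by
          have hx := (F (κ x) ⟨x, rfl⟩).2
          have hy := (F (κ y) ⟨y, rfl⟩).2
          rw [hxy] at hx; rw [hx] at hy; exact hy.symm ▸ rfl
        have h2 : ((F (κ x)) ⟨x, rfl⟩).1 = ((F (κ x)) ⟨y, hk.symm⟩).1 := by
          rw [hxy]; exact (key (κ y) (κ x) hk.symm y rfl hk.symm)
        have := (F (κ x)).injective (Subtype.ext h2)
        exact congrArg Subtype.val this)),
      fun x => (F (κ x) ⟨x, rfl⟩).2⟩
  left_inv σ := Subtype.ext (Equiv.ext fun x => rfl)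
  right_inv F := by
    funext k
    apply Equiv.ext
    rintro ⟨x, hx⟩
    apply Subtype.ext
    show (F (κ x) ⟨x, rfl⟩).1 = (F k ⟨x, hx⟩).1
    subst hx; rfl

lemma card_perm_labels (κ κ' : α → Fin 4)
    (h : ∀ k, (univ.filter fun x => κ x = k).card = (univ.filter fun x => κ' x = k).card) :
    (univ.filter fun σ : Equiv.Perm α => ∀ x, κ' (σ x) = κ x).card
      = ∏ k : Fin 4, Nat.factorial (univ.filter fun x => κ x = k).card := by
  have h1 : (univ.filter fun σ : Equiv.Perm α => ∀ x, κ' (σ x) = κ x).card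
      = Fintype.card {σ : Equiv.Perm α // ∀ x, κ' (σ x) = κ x} :=
    (Fintype.card_subtype _).symm
  rw [h1, Fintype.card_congr (permBlocksEquiv κ κ'), Fintype.card_pi]
  refine Finset.prod_congr rfl fun k _ => ?_
  have e : {x // κ x = k} ≃ {x // κ' x = k} :=
    Fintype.equivOfCardEq (by rw [Fintype.card_subtype, Fintype.card_subtype]; exact h k)
  rw [Fintype.card_equiv e, Fintype.card_subtype]

end blocks
set_option linter.unusedVariables false
open Finset

section lab
variable {α : Type*} [Fintype α] [DecidableEq α]

def lab (A B C : Finset α) (x : α) : Fin 4 :=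
  if x ∈ A then 0 else if x ∈ B then 1 else if x ∈ C then 2 else 3

variable {A B C : Finset α}

lemma lab_eq_zero {x : α} : lab A B C x = 0 ↔ x ∈ A := by
  unfold lab; split_ifs <;> simp_all

lemma lab_le_one (hAB : A ⊆ B) {x : α} : lab A B C x ≤ 1 ↔ x ∈ B := by
  unfold lab; split_ifs with h1 h2 h3
  · exact iff_of_true (by decide) (hAB h1)
  · exact iff_of_true (by decide) h2
  · exact iff_of_false (by decide) h2
  · exact iff_of_false (by decide) h2

lemma lab_le_two (hAB : A ⊆ B) (hBC : B ⊆ C) {x : α} : lab A B C x ≤ 2 ↔ x ∈ C := by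
  unfold lab; split_ifs with h1 h2 h3
  · exact iff_of_true (by decide) (hBC (hAB h1))
  · exact iff_of_true (by decide) (hBC h2)
  · exact iff_of_true (by decide) h3
  · exact iff_of_false (by decide) h3

lemma lab_fiber0 : (univ.filter fun x => lab A B C x = 0) = A := by
  ext x; simp [lab_eq_zero]

lemma lab_fiber1 : (univ.filter fun x => lab A B C x = 1) = B \ A := by
  ext x; simp only [mem_filter, mem_univ, true_and, mem_sdiff]; simp only [lab]
  split_ifs with h1 h2 h3
  · exact iff_of_false (by decide) (fun h => h.2 h1)
  · exact iff_of_true rfl ⟨h2, h1⟩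
  · exact iff_of_false (by decide) (fun h => h2 h.1)
  · exact iff_of_false (by decide) (fun h => h2 h.1)

lemma lab_fiber2 (hAB : A ⊆ B) : (univ.filter fun x => lab A B C x = 2) = C \ B := by
  ext x; simp only [mem_filter, mem_univ, true_and, mem_sdiff]; simp only [lab]
  split_ifs with h1 h2 h3
  · exact iff_of_false (by decide) (fun h => h.2 (hAB h1))
  · exact iff_of_false (by decide) (fun h => h.2 h2)
  · exact iff_of_true rfl ⟨h3, h2⟩
  · exact iff_of_false (by decide) (fun h => h3 h.1)

lemma lab_fiber3 (hAB : A ⊆ B) (hBC : B ⊆ C) :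
    (univ.filter fun x => lab A B C x = 3) = univ \ C := by
  ext x; simp only [mem_filter, mem_univ, true_and, mem_sdiff]; simp only [lab]
  split_ifs with h1 h2 h3
  · exact iff_of_false (by decide) (fun h => h (hBC (hAB h1)))
  · exact iff_of_false (by decide) (fun h => h (hBC h2))
  · exact iff_of_false (by decide) (fun h => h h3)
  · exact iff_of_true rfl h3

lemma image_eq_iff_forall (σ : Equiv.Perm α) (A S : Finset α) :
    A.image σ = S ↔ ∀ x, x ∈ A ↔ σ x ∈ S := by
  constructor
  · rintro rfl x
    constructor
    · exact fun hx => mem_image_of_mem _ hx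
    · intro hx
      rcases mem_image.mp hx with ⟨y, hy, hxy⟩
      rwa [← σ.injective hxy]
  · intro h; ext y
    rw [mem_image]
    constructor
    · rintro ⟨x, hx, rfl⟩; exact (h x).mp hx
    · intro hy; exact ⟨σ.symm y, (h _).mpr (by simpa using hy), by simp⟩

lemma lab_cond_iff {S T U : Finset α} (hAB : A ⊆ B) (hBC : B ⊆ C)
    (hST : S ⊆ T) (hTU : T ⊆ U) (σ : Equiv.Perm α) :
    (∀ x, lab S T U (σ x) = lab A B C x) ↔
      (A.image σ = S ∧ B.image σ = T ∧ C.image σ = U) := by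
  constructor
  · intro h
    refine ⟨(image_eq_iff_forall σ A S).mpr fun x => ?_,
            (image_eq_iff_forall σ B T).mpr fun x => ?_,
            (image_eq_iff_forall σ C U).mpr fun x => ?_⟩
    · rw [← lab_eq_zero (A := A) (B := B) (C := C), ← h x, lab_eq_zero]
    · rw [← lab_le_one (C := C) hAB, ← h x, lab_le_one hST]
    · rw [← lab_le_two hAB hBC, ← h x, lab_le_two hST hTU]
  · rintro ⟨h1, h2, h3⟩ x
    have e1 : (σ x ∈ S) = (x ∈ A) := propext (((image_eq_iff_forall σ A S).mp h1) x).symm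
    have e2 : (σ x ∈ T) = (x ∈ B) := propext (((image_eq_iff_forall σ B T).mp h2) x).symm
    have e3 : (σ x ∈ U) = (x ∈ C) := propext (((image_eq_iff_forall σ C U).mp h3) x).symm
    simp only [lab, e1, e2, e3]

end lab

section pref
variable {m : ℕ}

def pref (m j : ℕ) : Finset (Fin m) := univ.filter fun k => (k : ℕ) < j

lemma mem_pref {j : ℕ} {k : Fin m} : k ∈ pref m j ↔ (k : ℕ) < j := by simp [pref]

lemma pref_mono {i j : ℕ} (h : i ≤ j) : pref m i ⊆ pref m j := fun k hk =>
  mem_pref.mpr (lt_of_lt_of_le (mem_pref.mp hk) h)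

lemma card_pref {j : ℕ} (h : j ≤ m) : (pref m j).card = j := by
  have : pref m j = (univ : Finset (Fin j)).map (Fin.castLEEmb h) := by
    ext k
    simp only [mem_pref, mem_map, mem_univ, true_and]
    constructor
    · intro hk; exact ⟨⟨(k : ℕ), hk⟩, by apply Fin.ext; simp [Fin.castLEEmb]⟩
    · rintro ⟨x, rfl⟩; simp [Fin.castLEEmb]
  rw [this, card_map, card_univ, Fintype.card_fin]
end pref

lemma count4 {m : ℕ} {a b c : ℕ} {S T U : Finset (Fin m)} (hab : a ≤ b) (hbc : b ≤ c)
    (hcm : c ≤ m) (hST : S ⊆ T) (hTU : T ⊆ U) (hS : S.card = a) (hT : T.card = b)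
    (hU : U.card = c) :
    (univ.filter fun σ : Equiv.Perm (Fin m) =>
        (pref m a).image σ = S ∧ (pref m b).image σ = T ∧ (pref m c).image σ = U).card
      = a.factorial * (b - a).factorial * (c - b).factorial * (m - c).factorial := by
  have ham : a ≤ m := hab.trans (hbc.trans hcm)
  have hbm : b ≤ m := hbc.trans hcm
  have hAB : pref m a ⊆ pref m b := pref_mono hab
  have hBC : pref m b ⊆ pref m c := pref_mono hbc
  have hfil : (univ.filter fun σ : Equiv.Perm (Fin m) =>
      (pref m a).image σ = S ∧ (pref m b).image σ = T ∧ (pref m c).image σ = U)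
      = (univ.filter fun σ : Equiv.Perm (Fin m) =>
          ∀ x, lab S T U (σ x) = lab (pref m a) (pref m b) (pref m c) x) := by
    apply filter_congr; intro σ _
    exact (lab_cond_iff hAB hBC hST hTU σ).symm
  have hc0 : (univ.filter fun x => lab (pref m a) (pref m b) (pref m c) x = 0).card = a := by
    rw [lab_fiber0, card_pref ham]
  have hc1 : (univ.filter fun x => lab (pref m a) (pref m b) (pref m c) x = 1).card = b - a := by
    rw [lab_fiber1, card_sdiff_of_subset hAB, card_pref hbm, card_pref ham]
  have hc2 : (univ.filter fun x => lab (pref m a) (pref m b) (pref m c) x = 2).card = c - b := by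
    rw [lab_fiber2 hAB, card_sdiff_of_subset hBC, card_pref hcm, card_pref hbm]
  have hc3 : (univ.filter fun x => lab (pref m a) (pref m b) (pref m c) x = 3).card = m - c := by
    rw [lab_fiber3 hAB hBC, card_sdiff_of_subset (subset_univ _), card_univ, Fintype.card_fin,
      card_pref hcm]
  have hd0 : (univ.filter fun x => lab S T U x = 0).card = a := by rw [lab_fiber0, hS]
  have hd1 : (univ.filter fun x => lab S T U x = 1).card = b - a := by
    rw [lab_fiber1, card_sdiff_of_subset hST, hS, hT]
  have hd2 : (univ.filter fun x => lab S T U x = 2).card = c - b := by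
    rw [lab_fiber2 hST, card_sdiff_of_subset hTU, hT, hU]
  have hd3 : (univ.filter fun x => lab S T U x = 3).card = m - c := by
    rw [lab_fiber3 hST hTU, card_sdiff_of_subset (subset_univ _), card_univ, Fintype.card_fin, hU]
  have h : ∀ k : Fin 4,
      (univ.filter fun x => lab (pref m a) (pref m b) (pref m c) x = k).card
        = (univ.filter fun x => lab S T U x = k).card := by
    intro k
    fin_cases k
    · exact hc0.trans hd0.symm
    · exact hc1.trans hd1.symm
    · exact hc2.trans hd2.symm
    · exact hc3.trans hd3.symm
  rw [hfil]
  have key := card_perm_labels (lab (pref m a) (pref m b) (pref m c)) (lab S T U) h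
  rw [Fin.prod_univ_four, hc0, hc1, hc2, hc3] at key
  convert key using 2
  congr!


section chains

variable {m : ℕ} (f : Finset (Fin m) → Bool) (i0 : Fin m)

lemma mem_boundary {S : Finset (Fin m)} :
    S ∈ boundary f i0 ↔ i0 ∉ S ∧ f (insert i0 S) = true ∧ f S = false := by
  simp [boundary]

lemma boundary_subset_erase {S : Finset (Fin m)} (hS : S ∈ boundary f i0) :
    S ⊆ univ.erase i0 := by
  intro x hx
  refine mem_erase.mpr ⟨fun h => ((mem_boundary f i0).mp hS).1 (h ▸ hx), mem_univ x⟩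

lemma card_univ_erase : (univ.erase i0).card = m - 1 := by
  rw [card_erase_of_mem (mem_univ i0), card_univ, Fintype.card_fin]

lemma boundary_card_le {S : Finset (Fin m)} (hS : S ∈ boundary f i0) :
    S.card ≤ m - 1 := by
  have := card_le_card (boundary_subset_erase f i0 hS)
  rwa [card_univ_erase] at this

lemma filter_lt_eq_pref (j : Fin m) :
    (univ.filter fun k => k < j) = pref m (j : ℕ) := by
  ext k; simp only [mem_filter, mem_univ, true_and, mem_pref, Fin.lt_def]

lemma filter_le_eq_pref (j : Fin m) :
    (univ.filter fun k => k ≤ j) = pref m ((j : ℕ) + 1) := by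
  ext k; simp only [mem_filter, mem_univ, true_and, mem_pref, Fin.le_def]; omega

lemma pref_succ_fin (j : Fin m) :
    pref m ((j : ℕ) + 1) = insert j (pref m (j : ℕ)) := by
  ext k
  simp only [mem_pref, mem_insert, Fin.ext_iff]
  omega

/-- The numerator of the Shapley value counts boundary sets with factorial weights. -/
lemma shapley_count :
    ((univ.filter (fun σ : Equiv.Perm (Fin m) =>
      ∃ j : Fin m, σ j = i0 ∧
        f ((univ.filter (fun k => k < j)).image (fun k => σ k)) = false ∧
        f ((univ.filter (fun k => k ≤ j)).image (fun k => σ k)) = true)).card : ℕ)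
      = ∑ S ∈ boundary f i0, Nat.factorial S.card * Nat.factorial (m - 1 - S.card) := by
  set B := boundary f i0 with hB
  set Piv := univ.filter (fun σ : Equiv.Perm (Fin m) =>
      ∃ j : Fin m, σ j = i0 ∧
        f ((univ.filter (fun k => k < j)).image (fun k => σ k)) = false ∧
        f ((univ.filter (fun k => k ≤ j)).image (fun k => σ k)) = true) with hPiv
  have maps : ∀ σ ∈ Piv, (univ.filter fun k => k < σ.symm i0).image σ ∈ B := by
    intro σ hσ
    rw [hPiv, mem_filter] at hσ
    obtain ⟨-, j, hj, hfalse, htrue⟩ := hσ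
    have hjj : σ.symm i0 = j := by rw [Equiv.symm_apply_eq]; exact hj.symm
    rw [hjj]
    rw [mem_boundary]
    refine ⟨?_, ?_, hfalse⟩
    · intro hi
      rcases mem_image.mp hi with ⟨k, hk, hki⟩
      have : k = j := σ.injective (hki.trans hj.symm)
      rw [this] at hk
      exact absurd (mem_filter.mp hk).2 (lt_irrefl j)
    · have hsplit : (univ.filter fun k => k ≤ j) = insert j (univ.filter fun k => k < j) := by
        ext k
        simp only [mem_filter, mem_univ, true_and, mem_insert]
        constructor
        · intro h; rcases lt_or_eq_of_le h with h' | h'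
          · exact Or.inr h'
          · exact Or.inl h'
        · rintro (rfl | h); · exact le_refl _
          · exact le_of_lt h
      rw [hsplit, image_insert, hj] at htrue
      exact htrue
  rw [card_eq_sum_card_fiberwise maps]
  refine Finset.sum_congr rfl fun S hS => ?_
  rw [mem_boundary] at hS
  obtain ⟨hi0S, htrue, hfalse⟩ := hS
  have hsm : S.card + 1 ≤ m := by
    have h1 : (insert i0 S).card = S.card + 1 := card_insert_of_notMem hi0S
    have h2 : (insert i0 S).card ≤ m := by
      have := card_le_card (subset_univ (insert i0 S))
      rwa [card_univ, Fintype.card_fin] at this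
    omega
  have hsetseq : Piv.filter (fun σ : Equiv.Perm (Fin m) => (univ.filter fun k => k < σ.symm i0).image σ = S)
      = univ.filter (fun σ : Equiv.Perm (Fin m) =>
          (pref m S.card).image σ = S ∧ (pref m (S.card + 1)).image σ = insert i0 S ∧
          (pref m (S.card + 1)).image σ = insert i0 S) := by
    ext σ
    simp only [hPiv, mem_filter, mem_univ, true_and, and_self]
    constructor
    · rintro ⟨⟨j, hj, hfalse', htrue'⟩, hφ⟩
      have hjj : σ.symm i0 = j := by rw [Equiv.symm_apply_eq]; exact hj.symm
      rw [hjj] at hφ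
      have hcards : (j : ℕ) = S.card := by
        rw [← hφ, filter_lt_eq_pref, card_image_of_injective _ σ.injective,
          card_pref (le_of_lt j.isLt)]
      have h1 : (pref m S.card).image σ = S := by
        rw [← hcards, ← filter_lt_eq_pref]; exact hφ
      refine ⟨h1, ?_⟩
      rw [← hcards, pref_succ_fin, image_insert, hj, ← filter_lt_eq_pref, hφ]
    · rintro ⟨h1, h2⟩
      have hjlt : S.card < m := lt_of_lt_of_le (Nat.lt_succ_self _) hsm
      set j : Fin m := ⟨S.card, hjlt⟩ with hjdef
      have hjval : (j : ℕ) = S.card := rfl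
      have hσj : σ j = i0 := by
        have hjmem : j ∈ pref m (S.card + 1) := mem_pref.mpr (by omega)
        have h3 : σ j ∈ insert i0 S := by rw [← h2]; exact mem_image_of_mem _ hjmem
        rcases mem_insert.mp h3 with h4 | h4
        · exact h4
        · exfalso
          rw [← h1] at h4
          rcases mem_image.mp h4 with ⟨k, hk, hkj⟩
          have : k = j := σ.injective hkj
          rw [this] at hk
          have := mem_pref.mp hk
          omega
      have hjj : σ.symm i0 = j := by rw [Equiv.symm_apply_eq]; exact hσj.symm
      refine ⟨⟨j, hσj, ?_, ?_⟩, ?_⟩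
      · rw [filter_lt_eq_pref, hjval, h1]; exact hfalse
      · rw [filter_le_eq_pref, hjval, h2]; exact htrue
      · rw [hjj, filter_lt_eq_pref, hjval, h1]
  rw [hsetseq]
  have := count4 (m := m) (a := S.card) (b := S.card + 1) (c := S.card + 1)
    (S := S) (T := insert i0 S) (U := insert i0 S)
    (Nat.le_succ _) le_rfl hsm (subset_insert _ _) (subset_refl _)
    rfl (card_insert_of_notMem hi0S) (card_insert_of_notMem hi0S)
  rw [this]
  have e1 : S.card + 1 - S.card = 1 := by omega
  have e2 : m - (S.card + 1) = m - 1 - S.card := by omega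
  rw [e1, e2, Nat.sub_self, Nat.factorial_one, Nat.factorial_zero]
  ring

end chains

section chains2

variable {m : ℕ} (f : Finset (Fin m) → Bool) (i0 : Fin m)

/-- Permutations whose first `m-1` positions enumerate `[m] \ {i0}` (i.e. `i0` is last). -/
def chainA (m : ℕ) (i0 : Fin m) : Finset (Equiv.Perm (Fin m)) :=
  univ.filter (fun σ => (pref m (m-1)).image σ = univ.erase i0)

lemma card_chainA (hm : 0 < m) : (chainA m i0).card = Nat.factorial (m-1) := by
  have h1 : chainA m i0 = univ.filter (fun σ : Equiv.Perm (Fin m) =>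
      (pref m (m-1)).image σ = univ.erase i0 ∧ (pref m (m-1)).image σ = univ.erase i0 ∧
      (pref m (m-1)).image σ = univ.erase i0) := by
    ext σ; simp only [chainA, mem_filter, mem_univ, true_and, and_self]
  rw [h1, count4 le_rfl le_rfl (Nat.sub_le m 1) (subset_refl _) (subset_refl _)
    (card_univ_erase i0) (card_univ_erase i0) (card_univ_erase i0)]
  have e1 : m - (m-1) = 1 := by omega
  rw [Nat.sub_self, e1, Nat.factorial_zero, Nat.factorial_one]
  ring

lemma chain_single {j : ℕ} (hm : 0 < m) (hj : j < m) :
    ((chainA m i0).filter (fun σ : Equiv.Perm (Fin m) => (pref m j).image σ ∈ boundary f i0)).card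
      = ∑ S ∈ boundary f i0,
          (if S.card = j then Nat.factorial j * Nat.factorial (m-1-j) else 0) := by
  have maps : ∀ σ ∈ (chainA m i0).filter (fun σ : Equiv.Perm (Fin m) => (pref m j).image σ ∈ boundary f i0),
      (pref m j).image σ ∈ boundary f i0 := fun σ hσ => (mem_filter.mp hσ).2
  rw [card_eq_sum_card_fiberwise maps]
  refine Finset.sum_congr rfl fun S hS => ?_
  by_cases hcard : S.card = j
  · rw [if_pos hcard]
    have hjm1 : j ≤ m - 1 := hcard ▸ boundary_card_le f i0 hS
    have hseteq : (((chainA m i0).filter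
          (fun σ : Equiv.Perm (Fin m) => (pref m j).image σ ∈ boundary f i0)).filter
          (fun σ : Equiv.Perm (Fin m) => (pref m j).image σ = S))
        = univ.filter (fun σ : Equiv.Perm (Fin m) =>
            (pref m j).image σ = S ∧ (pref m (m-1)).image σ = univ.erase i0 ∧
            (pref m (m-1)).image σ = univ.erase i0) := by
      ext σ
      simp only [mem_filter, mem_univ, true_and, chainA, and_self]
      constructor
      · rintro ⟨⟨hA, -⟩, heq⟩; exact ⟨heq, hA⟩
      · rintro ⟨h1, h2⟩; exact ⟨⟨h2, h1 ▸ hS⟩, h1⟩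
    rw [hseteq, count4 hjm1 le_rfl (Nat.sub_le m 1) (boundary_subset_erase f i0 hS)
      (subset_refl _) hcard (card_univ_erase i0) (card_univ_erase i0)]
    have e1 : m - (m-1) = 1 := by omega
    rw [Nat.sub_self, e1, Nat.factorial_zero, Nat.factorial_one]
    ring
  · rw [if_neg hcard]
    rw [Finset.card_eq_zero, Finset.filter_eq_empty_iff]
    intro σ hσ
    intro heq
    apply hcard
    rw [← heq, card_image_of_injective _ σ.injective, card_pref (le_of_lt hj)]

lemma chain_pair {i j : ℕ} (hij : i < j) (hj : j < m) :
    ((chainA m i0).filter (fun σ : Equiv.Perm (Fin m) =>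
        (pref m i).image σ ∈ boundary f i0 ∧ (pref m j).image σ ∈ boundary f i0)).card
      = ((univ : Finset (Finset (Fin m) × Finset (Fin m))).filter
          (fun P => P.1.card = i ∧ P.2.card = j ∧ P.1 ⊆ P.2 ∧
            P.1 ∈ boundary f i0 ∧ P.2 ∈ boundary f i0)).card
        * (Nat.factorial i * Nat.factorial (j-i) * Nat.factorial (m-1-j)) := by
  set pairSet := (univ : Finset (Finset (Fin m) × Finset (Fin m))).filter
      (fun P => P.1.card = i ∧ P.2.card = j ∧ P.1 ⊆ P.2 ∧
        P.1 ∈ boundary f i0 ∧ P.2 ∈ boundary f i0) with hpairSet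
  have maps : ∀ σ ∈ (chainA m i0).filter (fun σ : Equiv.Perm (Fin m) =>
      (pref m i).image σ ∈ boundary f i0 ∧ (pref m j).image σ ∈ boundary f i0),
      ((pref m i).image σ, (pref m j).image σ) ∈ pairSet := by
    intro σ hσ
    rw [mem_filter] at hσ
    obtain ⟨-, h1, h2⟩ := hσ
    rw [hpairSet, mem_filter]
    exact ⟨mem_univ _,
      by rw [card_image_of_injective _ σ.injective, card_pref (by omega : i ≤ m)],
      by rw [card_image_of_injective _ σ.injective, card_pref (le_of_lt hj)],
      image_subset_image (pref_mono (le_of_lt hij)), h1, h2⟩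
  rw [card_eq_sum_card_fiberwise maps]
  rw [show (pairSet.card * (Nat.factorial i * Nat.factorial (j-i) * Nat.factorial (m-1-j)))
      = ∑ _P ∈ pairSet, (Nat.factorial i * Nat.factorial (j-i) * Nat.factorial (m-1-j)) from by
    rw [Finset.sum_const, smul_eq_mul]]
  refine Finset.sum_congr rfl fun P hP => ?_
  rw [hpairSet, mem_filter] at hP
  obtain ⟨-, hc1, hc2, hsub, hb1, hb2⟩ := hP
  have hjm1 : j ≤ m - 1 := hc2 ▸ boundary_card_le f i0 hb2
  have hseteq : (((chainA m i0).filter (fun σ : Equiv.Perm (Fin m) =>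
        (pref m i).image σ ∈ boundary f i0 ∧ (pref m j).image σ ∈ boundary f i0)).filter
        (fun σ : Equiv.Perm (Fin m) => ((pref m i).image σ, (pref m j).image σ) = P))
      = univ.filter (fun σ : Equiv.Perm (Fin m) =>
          (pref m i).image σ = P.1 ∧ (pref m j).image σ = P.2 ∧
          (pref m (m-1)).image σ = univ.erase i0) := by
    ext σ
    simp only [mem_filter, mem_univ, true_and, chainA, Prod.ext_iff]
    constructor
    · rintro ⟨⟨hA, -, -⟩, he1, he2⟩; exact ⟨he1, he2, hA⟩
    · rintro ⟨h1, h2, h3⟩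
      exact ⟨⟨h3, h1 ▸ hb1, h2 ▸ hb2⟩, h1, h2⟩
  rw [hseteq, count4 (le_of_lt hij) hjm1 (Nat.sub_le m 1) hsub
    (boundary_subset_erase f i0 hb2) hc1 hc2 (card_univ_erase i0)]
  have e1 : m - (m-1) = 1 := by omega
  rw [e1, Nat.factorial_one]
  have e2 : m - 1 - j = m-1-j := rfl
  ring

end chains2

lemma two_mul_lt_pairs {γ : Type*} [DecidableEq γ] [LinearOrder γ] (s : Finset γ) :
    2 * ((s ×ˢ s).filter fun p => p.1 < p.2).card + s.card = s.card * s.card := by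
  have hsplit : s.offDiag
      = (s ×ˢ s).filter (fun p => p.1 < p.2) ∪ (s ×ˢ s).filter (fun p => p.2 < p.1) := by
    ext p
    simp only [mem_offDiag, mem_union, mem_filter, mem_product]
    constructor
    · rintro ⟨h1, h2, h3⟩
      rcases lt_or_gt_of_ne h3 with h | h
      · exact Or.inl ⟨⟨h1, h2⟩, h⟩
      · exact Or.inr ⟨⟨h1, h2⟩, h⟩
    · rintro (⟨⟨h1, h2⟩, h⟩ | ⟨⟨h1, h2⟩, h⟩)
      · exact ⟨h1, h2, ne_of_lt h⟩
      · exact ⟨h1, h2, (ne_of_lt h).symm⟩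
  have hdisj : Disjoint ((s ×ˢ s).filter (fun p => p.1 < p.2))
      ((s ×ˢ s).filter (fun p => p.2 < p.1)) := by
    rw [Finset.disjoint_left]
    intro p hp hq
    exact lt_asymm (mem_filter.mp hp).2 (mem_filter.mp hq).2
  have hswap : ((s ×ˢ s).filter (fun p => p.2 < p.1)).card
      = ((s ×ˢ s).filter (fun p => p.1 < p.2)).card := by
    apply Finset.card_bij (fun p _ => (p.2, p.1))
    · intro p hp
      rw [mem_filter, mem_product] at hp ⊢
      exact ⟨⟨hp.1.2, hp.1.1⟩, hp.2⟩
    · intro p hp q hq h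
      rw [Prod.ext_iff] at h ⊢
      exact ⟨h.2, h.1⟩
    · intro p hp
      rw [mem_filter, mem_product] at hp
      exact ⟨(p.2, p.1), by rw [mem_filter, mem_product]; exact ⟨⟨hp.1.2, hp.1.1⟩, hp.2⟩, rfl⟩
  have hoff := Finset.offDiag_card (s := s)
  rw [hsplit, card_union_of_disjoint hdisj, hswap] at hoff
  have hle : s.card ≤ s.card * s.card := by
    rcases Nat.eq_zero_or_pos s.card with h | h
    · rw [h]
    · exact Nat.le_mul_of_pos_left _ h
  omega

lemma main_aux {m : ℕ} (hm : 0 < m) (f : Finset (Fin m) → Bool) (i0 : Fin m) (lam : ℚ)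
    (hlam : shapley f i0 = lam) (hkey : 2 ≤ lam * ((m : ℚ) + 1)) (hlpos : 0 < lam) :
    lam ^ 2 / 2 * ((m.choose 2 : ℕ) : ℚ) ≤
      ∑ j ∈ Finset.range m, ∑ i ∈ Finset.range j, muPair f i0 i j := by
  classical
  set B := boundary f i0 with hB
  set A := chainA m i0 with hA
  set X : Equiv.Perm (Fin m) → ℕ :=
    fun σ => ((Finset.range m).filter (fun j => (pref m j).image σ ∈ B)).card with hX
  set Y : Equiv.Perm (Fin m) → ℕ :=
    fun σ => ((Finset.range m ×ˢ Finset.range m).filter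
      (fun p => p.1 < p.2 ∧ (pref m p.1).image σ ∈ B ∧ (pref m p.2).image σ ∈ B)).card with hY
  set Np : ℕ → ℕ → ℕ := fun i j =>
    ((Finset.univ : Finset (Finset (Fin m) × Finset (Fin m))).filter
      (fun P => P.1.card = i ∧ P.2.card = j ∧ P.1 ⊆ P.2 ∧
        P.1 ∈ boundary f i0 ∧ P.2 ∈ boundary f i0)).card with hNp
  set w : ℕ → ℕ → ℕ := fun i j =>
    Nat.factorial i * Nat.factorial (j - i) * Nat.factorial (m - 1 - j) with hw
  -- Step 1 : sum of X over A
  have step1 : ∑ σ ∈ A, X σ = ∑ S ∈ B, Nat.factorial S.card * Nat.factorial (m - 1 - S.card) := by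
    have e1 : ∑ σ ∈ A, X σ
        = ∑ j ∈ Finset.range m, ((A.filter (fun σ : Equiv.Perm (Fin m) => (pref m j).image σ ∈ B)).card) := by
      simp only [hX, Finset.card_filter]
      rw [Finset.sum_comm]
    rw [e1]
    have e2 : ∀ j ∈ Finset.range m, (A.filter (fun σ : Equiv.Perm (Fin m) => (pref m j).image σ ∈ B)).card
        = ∑ S ∈ B, (if S.card = j then Nat.factorial j * Nat.factorial (m-1-j) else 0) := by
      intro j hj
      exact chain_single f i0 hm (Finset.mem_range.mp hj)
    rw [Finset.sum_congr rfl e2, Finset.sum_comm]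
    refine Finset.sum_congr rfl fun S hS => ?_
    rw [Finset.sum_ite_eq]
    have : S.card ∈ Finset.range m := by
      rw [Finset.mem_range]
      have := boundary_card_le f i0 hS
      omega
    rw [if_pos this]
  -- Step 2 : pointwise pair identity
  have step2 : ∀ σ : Equiv.Perm (Fin m), 2 * Y σ + X σ = X σ * X σ := by
    intro σ
    have hset : ((Finset.range m ×ˢ Finset.range m).filter
        (fun p => p.1 < p.2 ∧ (pref m p.1).image σ ∈ B ∧ (pref m p.2).image σ ∈ B))
        = ((((Finset.range m).filter (fun j => (pref m j).image σ ∈ B)) ×ˢ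
            ((Finset.range m).filter (fun j => (pref m j).image σ ∈ B))).filter
          (fun p => p.1 < p.2)) := by
      ext p
      simp only [mem_filter, mem_product, Finset.mem_range]
      tauto
    simp only [hY]
    rw [hset]
    simp only [hX]
    exact two_mul_lt_pairs _
  -- Step 3 : sum of Y over A
  have step3 : ∑ σ ∈ A, Y σ
      = ∑ j ∈ Finset.range m, ∑ i ∈ Finset.range j, Np i j * w i j := by
    have e1 : ∑ σ ∈ A, Y σ
        = ∑ p ∈ Finset.range m ×ˢ Finset.range m,
            ((A.filter (fun σ : Equiv.Perm (Fin m) => p.1 < p.2 ∧ (pref m p.1).image σ ∈ B ∧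
              (pref m p.2).image σ ∈ B)).card) := by
      simp only [hY, Finset.card_filter]
      rw [Finset.sum_comm]
    rw [e1]
    have e2 : ∀ p ∈ Finset.range m ×ˢ Finset.range m,
        ((A.filter (fun σ : Equiv.Perm (Fin m) => p.1 < p.2 ∧ (pref m p.1).image σ ∈ B ∧
          (pref m p.2).image σ ∈ B)).card)
        = if p.1 < p.2 then Np p.1 p.2 * w p.1 p.2 else 0 := by
      intro p hp
      rw [Finset.mem_product, Finset.mem_range, Finset.mem_range] at hp
      by_cases hlt : p.1 < p.2
      · rw [if_pos hlt]
        have hfil : (A.filter (fun σ : Equiv.Perm (Fin m) => p.1 < p.2 ∧ (pref m p.1).image σ ∈ B ∧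
            (pref m p.2).image σ ∈ B))
            = (A.filter (fun σ : Equiv.Perm (Fin m) =>
                (pref m p.1).image σ ∈ boundary f i0 ∧ (pref m p.2).image σ ∈ boundary f i0)) := by
          apply Finset.filter_congr
          intro σ _
          simp [hlt, hB]
        rw [hfil, hA, chain_pair f i0 hlt hp.2]
      · rw [if_neg hlt]
        rw [Finset.card_eq_zero, Finset.filter_eq_empty_iff]
        intro σ _ hc
        exact hlt hc.1
    rw [Finset.sum_congr rfl e2, Finset.sum_product]
    rw [Finset.sum_comm]
    refine Finset.sum_congr rfl fun j hj => ?_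
    rw [Finset.mem_range] at hj
    rw [← Finset.sum_filter]
    have : (Finset.range m).filter (fun i => i < j) = Finset.range j := by
      ext a
      simp only [Finset.mem_filter, Finset.mem_range]
      omega
    rw [this]
  -- ℚ-level assembly
  have hMne : ((Nat.factorial m : ℕ) : ℚ) ≠ 0 := by
    exact_mod_cast (Nat.factorial_pos m).ne'
  have hPivQ : ((∑ S ∈ B, Nat.factorial S.card * Nat.factorial (m - 1 - S.card) : ℕ) : ℚ)
      = lam * ((Nat.factorial m : ℕ) : ℚ) := by
    rw [hB, ← shapley_count f i0]
    rw [shapley, div_eq_iff hMne] at hlam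
    exact hlam
  have hFpos : (0:ℚ) < ((Nat.factorial (m-1) : ℕ) : ℚ) := by
    exact_mod_cast Nat.factorial_pos (m-1)
  have hMF : ((Nat.factorial m : ℕ) : ℚ) = (m:ℚ) * ((Nat.factorial (m-1) : ℕ) : ℚ) := by
    have hmm : m = (m-1)+1 := by omega
    have : Nat.factorial m = m * Nat.factorial (m-1) := by
      conv_lhs => rw [hmm]
      rw [Nat.factorial_succ, ← hmm]
    exact_mod_cast congrArg (Nat.cast : ℕ → ℚ) this
  have hXQ : (∑ σ ∈ A, (X σ : ℚ)) = lam * ((Nat.factorial m : ℕ) : ℚ) := by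
    rw [← Nat.cast_sum, step1, hPivQ]
  have hYX : 2 * (∑ σ ∈ A, (Y σ : ℚ)) + (∑ σ ∈ A, (X σ : ℚ)) = ∑ σ ∈ A, (X σ : ℚ)^2 := by
    have hnat : ∑ σ ∈ A, (2 * Y σ + X σ) = ∑ σ ∈ A, X σ * X σ :=
      Finset.sum_congr rfl (fun σ _ => step2 σ)
    have hq := congrArg (Nat.cast : ℕ → ℚ) hnat
    push_cast at hq
    rw [Finset.sum_add_distrib, ← Finset.mul_sum] at hq
    rw [hq]
    exact Finset.sum_congr rfl (fun σ _ => (sq ((X σ : ℚ))).symm)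
  have hCS : (∑ σ ∈ A, (X σ : ℚ))^2
      ≤ (∑ σ ∈ A, (X σ : ℚ)^2) * ((Nat.factorial (m-1) : ℕ) : ℚ) := by
    have hc : (∑ _σ ∈ A, (1:ℚ)^2) = ((Nat.factorial (m-1) : ℕ) : ℚ) := by
      rw [Finset.sum_const]
      rw [hA, card_chainA i0 hm]
      simp
    calc (∑ σ ∈ A, (X σ : ℚ))^2 = (∑ σ ∈ A, (X σ : ℚ) * 1)^2 := by simp
      _ ≤ (∑ σ ∈ A, (X σ : ℚ)^2) * (∑ _σ ∈ A, (1:ℚ)^2) :=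
          Finset.sum_mul_sq_le_sq_mul_sq A _ _
      _ = (∑ σ ∈ A, (X σ : ℚ)^2) * ((Nat.factorial (m-1) : ℕ) : ℚ) := by rw [hc]
  -- rewrite the goal sum
  have hgoal : ∑ j ∈ Finset.range m, ∑ i ∈ Finset.range j, muPair f i0 i j
      = (∑ σ ∈ A, (Y σ : ℚ)) / ((Nat.factorial (m-1) : ℕ) : ℚ) := by
    have hmu : ∀ j ∈ Finset.range m, ∀ i ∈ Finset.range j,
        muPair f i0 i j = ((Np i j * w i j : ℕ) : ℚ) / ((Nat.factorial (m-1) : ℕ) : ℚ) := by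
      intro j hj i hi
      rw [Finset.mem_range] at hj hi
      have him1 : i ≤ m - 1 := by omega
      have hjm1 : j ≤ m - 1 := by omega
      have hjimi : j - i ≤ m - 1 - i := by omega
      have hDw : (((m-1).choose i * ((m-1-i).choose (j-i))) * w i j) = Nat.factorial (m-1) := by
        have h1 := Nat.choose_mul_factorial_mul_factorial him1
        have h2 := Nat.choose_mul_factorial_mul_factorial hjimi
        have e : m - 1 - i - (j - i) = m - 1 - j := by omega
        rw [e] at h2
        calc ((m-1).choose i * ((m-1-i).choose (j-i))) * w i j
            = (m-1).choose i * i.factorial *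
                ((m-1-i).choose (j-i) * (j-i).factorial * (m-1-j).factorial) := by
              rw [hw]; ring
          _ = (m-1).choose i * i.factorial * (m-1-i).factorial := by rw [h2]
          _ = Nat.factorial (m-1) := h1
      have hDpos : 0 < (m-1).choose i * ((m-1-i).choose (j-i)) :=
        Nat.mul_pos (Nat.choose_pos him1) (Nat.choose_pos hjimi)
      have hwpos : 0 < w i j := by
        rw [hw]
        exact Nat.mul_pos (Nat.mul_pos (Nat.factorial_pos _) (Nat.factorial_pos _))
          (Nat.factorial_pos _)
      rw [muPair]
      simp only [hNp]
      have hFDw : ((Nat.factorial (m-1) : ℕ) : ℚ)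
          = (((m-1).choose i * ((m-1-i).choose (j-i)) : ℕ) : ℚ) * ((w i j : ℕ) : ℚ) := by
        exact_mod_cast congrArg (Nat.cast : ℕ → ℚ) hDw.symm
      rw [hFDw]
      have hc1 : (((m-1).choose i : ℕ) : ℚ) ≠ 0 := by
        exact_mod_cast (Nat.choose_pos him1).ne'
      have hc2 : (((m-1-i).choose (j-i) : ℕ) : ℚ) ≠ 0 := by
        exact_mod_cast (Nat.choose_pos hjimi).ne'
      have hwne : ((w i j : ℕ) : ℚ) ≠ 0 := by exact_mod_cast hwpos.ne'
      push_cast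
      field_simp
    rw [Finset.sum_congr rfl (fun j hj => Finset.sum_congr rfl (fun i hi => hmu j hj i hi))]
    simp only [← Finset.sum_div]
    congr 1
    rw [← Nat.cast_sum]
    have := congrArg (Nat.cast : ℕ → ℚ) step3
    rw [this]
    push_cast
    rfl
  rw [hgoal, Nat.cast_choose_two, le_div_iff₀ hFpos]
  -- final polynomial inequality
  have hm1 : (1:ℚ) ≤ (m:ℚ) := by exact_mod_cast hm
  have hXQF : (∑ σ ∈ A, (X σ : ℚ)) = lam * (m:ℚ) * ((Nat.factorial (m-1) : ℕ) : ℚ) := by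
    rw [hXQ, hMF]; ring
  have hSQ : lam^2 * (m:ℚ)^2 * ((Nat.factorial (m-1) : ℕ) : ℚ) ≤ ∑ σ ∈ A, (X σ : ℚ)^2 := by
    refine le_of_mul_le_mul_right ?_ hFpos
    calc lam^2 * (m:ℚ)^2 * ((Nat.factorial (m-1) : ℕ) : ℚ) * ((Nat.factorial (m-1) : ℕ) : ℚ)
        = (∑ σ ∈ A, (X σ : ℚ))^2 := by rw [hXQF]; ring
      _ ≤ (∑ σ ∈ A, (X σ : ℚ)^2) * ((Nat.factorial (m-1) : ℕ) : ℚ) := hCS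
  have hkey2 : 0 ≤ (lam * (m:ℚ)) * (lam * ((m:ℚ)+1) - 2) * ((Nat.factorial (m-1) : ℕ) : ℚ) := by
    apply mul_nonneg
    apply mul_nonneg
    · positivity
    · linarith
    · exact hFpos.le
  nlinarith [hkey2, hSQ, hYX, hXQF, hFpos]



/-- If `Φ_{f'}(1) = λ ≥ 1/n`, then the sum of the nested-pair boundary fractions
`μ'(i,j)` over `0 ≤ i < j ≤ 2n-2` is at least `(λ²/2)·C(2n-1,2)`. -/
theorem sum_muPair_lower (n : ℕ) (hn : 0 < n)
    (f' : Finset (Fin (2*n-1)) → Bool) (hf' : MonotoneB f') (lam : ℚ)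
    (hlam : shapley f' ⟨0, by omega⟩ = lam) (hln : 1 / (n : ℚ) ≤ lam) :
    lam ^ 2 / 2 * (((2*n-1).choose 2 : ℕ) : ℚ) ≤
      ∑ j ∈ Finset.range (2*n-1), ∑ i ∈ Finset.range j,
        muPair f' ⟨0, by omega⟩ i j := by
  have hm : 0 < 2*n-1 := by omega
  have hnQ : (0:ℚ) < (n:ℚ) := by exact_mod_cast hn
  have hlpos : 0 < lam := lt_of_lt_of_le (by positivity) hln
  have hcast : ((2*n-1 : ℕ) : ℚ) = 2*(n:ℚ) - 1 := by
    have : (1:ℕ) ≤ 2*n := by omega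
    push_cast [Nat.cast_sub this]
    ring
  have hkey : 2 ≤ lam * (((2*n-1 : ℕ) : ℚ) + 1) := by
    rw [hcast]
    have h1 : 1 ≤ lam * (n:ℚ) := by
      rw [div_le_iff₀ hnQ] at hln
      linarith
    nlinarith
  exact main_aux hm f' _ lam hlam hkey hlpos
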